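/- Let h > 0, ν > 0, let k be a nonzero integer, and let s ∈ ℂ with Re(s) > 0. Let ξ be a positive real satisfying (4/h²)·sinh²(ξh/2) = k², and let γ ∈ ℂ satisfy Re(γ) > 0 and (4/h²)·sinh²(γh/2) = s/ν + k². Then q(s) := (exp(−ξh) − 1) + ν k²·(exp(−ξh) − exp(−γh))/s ≠ 0. -/

import Mathlib

open Complex

lemma sinh_half_sq (z : ℂ) :
    4 * (Complex.sinh (z / 2)) ^ 2 = Complex.exp z + Complex.exp (-z) - 2 := by
  rw [Complex.sinh]
  have e1 : Complex.exp (z / 2) * Complex.exp (z / 2) = Complex.exp z := by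
    rw [← Complex.exp_add]; ring_nf
  have e2 : Complex.exp (-(z / 2)) * Complex.exp (-(z / 2)) = Complex.exp (-z) := by
    rw [← Complex.exp_add]; ring_nf
  have e3 : Complex.exp (z / 2) * Complex.exp (-(z / 2)) = 1 := by
    rw [← Complex.exp_add]; simp
  linear_combination e1 + e2 - 2 * e3

/-- Nonvanishing of `q(s)` in the right half-plane. -/
theorem stmt_4 (h ν : ℝ) (hh : 0 < h) (hν : 0 < ν)
    (k : ℤ) (hk : k ≠ 0) (s : ℂ) (hs : 0 < s.re)
    (ξ : ℝ) (hξpos : 0 < ξ)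
    (hξ : (4 / h ^ 2) * (Real.sinh (ξ * h / 2)) ^ 2 = (k : ℝ) ^ 2)
    (γ : ℂ) (hγre : 0 < γ.re)
    (hγ : (4 / (h : ℂ) ^ 2) * (Complex.sinh (γ * (h : ℂ) / 2)) ^ 2 = s / (ν : ℂ) + (k : ℂ) ^ 2) :
    (Complex.exp (-(ξ : ℂ) * (h : ℂ)) - 1)
      + (ν : ℂ) * (k : ℂ) ^ 2
        * ((Complex.exp (-(ξ : ℂ) * (h : ℂ)) - Complex.exp (-γ * (h : ℂ))) / s) ≠ 0 := by
  have hh0 : (h : ℂ) ≠ 0 := by exact_mod_cast hh.ne'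
  have hν0 : (ν : ℂ) ≠ 0 := by exact_mod_cast hν.ne'
  have hs0 : s ≠ 0 := by
    intro hs'; rw [hs'] at hs; simp at hs
  set a : ℂ := Complex.exp (-(ξ : ℂ) * (h : ℂ)) with ha_def
  set b : ℂ := Complex.exp (-γ * (h : ℂ)) with hb_def
  have ha0 : a ≠ 0 := Complex.exp_ne_zero _
  have hb0 : b ≠ 0 := Complex.exp_ne_zero _
  have habs_a : ‖a‖ < 1 := by
    rw [ha_def, Complex.norm_exp]
    have e : (-(ξ : ℂ) * (h : ℂ)).re = -(ξ * h) := by simp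
    rw [e]
    exact Real.exp_lt_one_iff.mpr (by nlinarith)
  have habs_b : ‖b‖ < 1 := by
    rw [hb_def, Complex.norm_exp]
    have e : (-γ * (h : ℂ)).re = -(γ.re * h) := by simp [Complex.mul_re]
    rw [e]
    exact Real.exp_lt_one_iff.mpr (by nlinarith)
  have ha1 : a - 1 ≠ 0 := by
    intro h'
    rw [sub_eq_zero.mp h'] at habs_a; simp at habs_a
  have hb1 : 1 - b ≠ 0 := by
    intro h'
    rw [(sub_eq_zero.mp h').symm] at habs_b; simp at habs_b
  -- cast the real relation to ℂ and clear denominators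
  have hξc : 4 * (Complex.sinh ((ξ : ℂ) * (h : ℂ) / 2)) ^ 2 = (k : ℂ) ^ 2 * (h : ℂ) ^ 2 := by
    have hc := congrArg (fun x : ℝ => (x : ℂ)) hξ
    push_cast at hc
    field_simp at hc
    rw [mul_comm (h : ℂ) (ξ : ℂ)] at hc
    linear_combination hc
  have hγ' : 4 * (Complex.sinh (γ * (h : ℂ) / 2)) ^ 2 * (ν : ℂ)
      = (s + (ν : ℂ) * (k : ℂ) ^ 2) * (h : ℂ) ^ 2 := by
    field_simp at hγ
    rw [mul_comm (h : ℂ) γ] at hγ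
    linear_combination hγ
  -- exponential identities
  have haA : Complex.exp ((ξ : ℂ) * (h : ℂ)) * a = 1 := by
    rw [ha_def, ← Complex.exp_add]; simp
  have hbB : Complex.exp (γ * (h : ℂ)) * b = 1 := by
    rw [hb_def, ← Complex.exp_add]; simp
  have hA := sinh_half_sq ((ξ : ℂ) * (h : ℂ))
  have hB := sinh_half_sq (γ * (h : ℂ))
  have ea : Complex.exp (-((ξ : ℂ) * (h : ℂ))) = a := by rw [ha_def, neg_mul]
  have eb : Complex.exp (-(γ * (h : ℂ))) = b := by rw [hb_def, neg_mul]
  rw [ea] at hA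
  rw [eb] at hB
  -- key algebraic relations
  have hkh : (k : ℂ) ^ 2 * (h : ℂ) ^ 2 = Complex.exp ((ξ : ℂ) * (h : ℂ)) + a - 2 := by
    linear_combination hA - hξc
  have hsh : s * (h : ℂ) ^ 2
      = (ν : ℂ) * (Complex.exp (γ * (h : ℂ)) + b) - (ν : ℂ) * (Complex.exp ((ξ : ℂ) * (h : ℂ)) + a) := by
    linear_combination (ν : ℂ) * hB - hγ' - (ν : ℂ) * hkh
  have hsab : s * (h : ℂ) ^ 2 * (a * b) = (ν : ℂ) * (a + a * b ^ 2 - b - a ^ 2 * b) := by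
    linear_combination a * b * hsh + (ν : ℂ) * a * hbB - (ν : ℂ) * b * haA
  have hka : (k : ℂ) ^ 2 * (h : ℂ) ^ 2 * a = 1 + a ^ 2 - 2 * a := by
    linear_combination a * hkh + haA
  have hI : ((a - 1) * s + (ν : ℂ) * (k : ℂ) ^ 2 * (a - b)) * ((h : ℂ) ^ 2 * (a * b))
      = (ν : ℂ) * (a - 1) * (1 - b) * (a - b) := by
    linear_combination (a - 1) * hsab + (ν : ℂ) * (a - b) * b * hka
  have hab : a - b ≠ 0 := by
    intro h'
    have hba : b = a := (sub_eq_zero.mp h').symm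
    rw [hba] at hsab
    have h0 : s * ((h : ℂ) ^ 2 * (a * a)) = 0 := by linear_combination hsab
    exact (mul_ne_zero hs0 (mul_ne_zero (pow_ne_zero _ hh0) (mul_ne_zero ha0 ha0))) h0
  intro hq
  have e : ((a - 1) + (ν : ℂ) * (k : ℂ) ^ 2 * ((a - b) / s)) * s
      = (a - 1) * s + (ν : ℂ) * (k : ℂ) ^ 2 * (a - b) := by
    field_simp
  have h0 : (ν : ℂ) * (a - 1) * (1 - b) * (a - b) = 0 := by
    rw [← hI, ← e, hq, zero_mul, zero_mul]
  exact (mul_ne_zero (mul_ne_zero (mul_ne_zero hν0 ha1) hb1) hab) h0
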